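/- The tempered-softmax distribution p(T) with p_i(T) = exp(s_i/T)/Σ_j exp(s_j/T) has Shannon entropy H(p(T)) = -Σ_i p_i(T) log p_i(T) that is nondecreasing in T for T > 0, given fixed real scores s_1,...,s_K. -/

import Mathlib

open Finset Real

noncomputable def softA {K : ℕ} (s : Fin K → ℝ) (β : ℝ) : ℝ := ∑ i, Real.exp (β * s i)
noncomputable def softB {K : ℕ} (s : Fin K → ℝ) (β : ℝ) : ℝ := ∑ i, Real.exp (β * s i) * s i
noncomputable def softC {K : ℕ} (s : Fin K → ℝ) (β : ℝ) : ℝ :=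
  ∑ i, Real.exp (β * s i) * s i * s i
noncomputable def softG {K : ℕ} (s : Fin K → ℝ) (β : ℝ) : ℝ :=
  Real.log (softA s β) - β * softB s β / softA s β

lemma softA_pos {K : ℕ} (hK : 0 < K) (s : Fin K → ℝ) (β : ℝ) : 0 < softA s β := by
  haveI : Nonempty (Fin K) := ⟨⟨0, hK⟩⟩
  exact Finset.sum_pos (fun i _ => Real.exp_pos _) Finset.univ_nonempty

lemma hasDerivAt_softA {K : ℕ} (s : Fin K → ℝ) (β : ℝ) :
    HasDerivAt (softA s) (softB s β) β := by
  apply HasDerivAt.fun_sum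
  intro i _
  simpa using ((hasDerivAt_id β).mul_const (s i)).exp

lemma hasDerivAt_softB {K : ℕ} (s : Fin K → ℝ) (β : ℝ) :
    HasDerivAt (softB s) (softC s β) β := by
  apply HasDerivAt.fun_sum
  intro i _
  simpa using (((hasDerivAt_id β).mul_const (s i)).exp.mul_const (s i))

lemma cauchy_softmax {K : ℕ} (s : Fin K → ℝ) (β : ℝ) :
    (softB s β) ^ 2 ≤ softA s β * softC s β := by
  have h := Finset.sum_mul_sq_le_sq_mul_sq Finset.univ
    (fun i => Real.sqrt (Real.exp (β * s i)))
    (fun i => Real.sqrt (Real.exp (β * s i)) * s i)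
  have he : ∀ i : Fin K, Real.sqrt (Real.exp (β * s i)) ^ 2 = Real.exp (β * s i) := by
    intro i; exact Real.sq_sqrt (Real.exp_pos _).le
  calc (softB s β) ^ 2
      = (∑ i, Real.sqrt (Real.exp (β * s i)) * (Real.sqrt (Real.exp (β * s i)) * s i)) ^ 2 := by
        congr 1; apply Finset.sum_congr rfl; intro i _
        rw [← mul_assoc, Real.mul_self_sqrt (Real.exp_pos _).le]
    _ ≤ (∑ i, Real.sqrt (Real.exp (β * s i)) ^ 2) *
        ∑ i, (Real.sqrt (Real.exp (β * s i)) * s i) ^ 2 := h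
    _ = softA s β * softC s β := by
        congr 1
        · exact Finset.sum_congr rfl fun i _ => he i
        · apply Finset.sum_congr rfl; intro i _
          rw [mul_pow, he i]; ring

lemma antitoneOn_softG {K : ℕ} (hK : 0 < K) (s : Fin K → ℝ) :
    AntitoneOn (softG s) (Set.Ici (0 : ℝ)) := by
  have hder : ∀ β : ℝ, HasDerivAt (softG s)
      (-β * (softA s β * softC s β - softB s β ^ 2) / softA s β ^ 2) β := by
    intro β
    have hA := hasDerivAt_softA s β
    have hB := hasDerivAt_softB s β
    have hApos := softA_pos hK s β
    have h1 : HasDerivAt (fun b => Real.log (softA s b)) (softB s β / softA s β) β :=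
      hA.log hApos.ne'
    have h2 : HasDerivAt (fun b => b * softB s b) (1 * softB s β + β * softC s β) β :=
      (hasDerivAt_id β).mul hB
    have h3 : HasDerivAt (fun b => b * softB s b / softA s b)
        (((1 * softB s β + β * softC s β) * softA s β - β * softB s β * softB s β) /
          softA s β ^ 2) β := h2.div hA hApos.ne'
    have h4 := h1.sub h3
    refine h4.congr_deriv ?_
    field_simp [hApos.ne']
    ring
  apply antitoneOn_of_deriv_nonpos (convex_Ici 0)
  · exact fun x _ => ((hder x).differentiableAt).continuousAt.continuousWithinAt
  · exact fun x _ => ((hder x).differentiableAt).differentiableWithinAt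
  · intro x hx
    rw [interior_Ici] at hx
    rw [(hder x).deriv]
    have hx0 : (0 : ℝ) < x := hx
    have hvar : 0 ≤ softA s x * softC s x - softB s x ^ 2 :=
      sub_nonneg.2 (cauchy_softmax s x)
    have hA2 : (0 : ℝ) < softA s x ^ 2 := pow_pos (softA_pos hK s x) 2
    apply div_nonpos_of_nonpos_of_nonneg _ hA2.le
    have : -x ≤ 0 := by linarith
    exact mul_nonpos_of_nonpos_of_nonneg this hvar

lemma entropy_eq_softG {K : ℕ} (hK : 0 < K) (s : Fin K → ℝ) (T : ℝ) (_hT : 0 < T) :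
    -∑ i, (Real.exp (s i / T) / ∑ j, Real.exp (s j / T)) *
        Real.log (Real.exp (s i / T) / ∑ j, Real.exp (s j / T)) = softG s T⁻¹ := by
  have hst : ∀ i, s i / T = T⁻¹ * s i := fun i => by rw [div_eq_mul_inv, mul_comm]
  simp only [hst]
  have hA : (∑ j, Real.exp (T⁻¹ * s j)) = softA s T⁻¹ := rfl
  rw [hA]
  have hApos := softA_pos hK s T⁻¹
  have hlog : ∀ i : Fin K, Real.log (Real.exp (T⁻¹ * s i) / softA s T⁻¹) =
      T⁻¹ * s i - Real.log (softA s T⁻¹) := by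
    intro i
    rw [Real.log_div (Real.exp_ne_zero _) hApos.ne', Real.log_exp]
  simp only [hlog]
  have key : ∀ i : Fin K, Real.exp (T⁻¹ * s i) / softA s T⁻¹ *
      (T⁻¹ * s i - Real.log (softA s T⁻¹)) =
      T⁻¹ * (Real.exp (T⁻¹ * s i) * s i) / softA s T⁻¹ -
      (Real.exp (T⁻¹ * s i) / softA s T⁻¹) * Real.log (softA s T⁻¹) := by
    intro i; ring
  rw [Finset.sum_congr rfl (fun i _ => key i), Finset.sum_sub_distrib]
  have e1 : (∑ i, T⁻¹ * (Real.exp (T⁻¹ * s i) * s i) / softA s T⁻¹) =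
      T⁻¹ * softB s T⁻¹ / softA s T⁻¹ := by
    rw [← Finset.sum_div, ← Finset.mul_sum]; rfl
  have e2 : (∑ i, (Real.exp (T⁻¹ * s i) / softA s T⁻¹) * Real.log (softA s T⁻¹)) =
      Real.log (softA s T⁻¹) := by
    rw [← Finset.sum_mul, ← Finset.sum_div, hA, div_self hApos.ne', one_mul]
  rw [e1, e2, softG]
  ring

/-- The Shannon entropy of the tempered softmax distribution is nondecreasing in the
temperature `T > 0`. -/
theorem tempered_softmax_entropy_monotone
    (K : ℕ) (hK : 0 < K) (s : Fin K → ℝ) :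
    MonotoneOn (fun T : ℝ =>
      -∑ i, (Real.exp (s i / T) / ∑ j, Real.exp (s j / T)) *
        Real.log (Real.exp (s i / T) / ∑ j, Real.exp (s j / T)))
      (Set.Ioi (0 : ℝ)) := by
  intro a ha b hb hab
  have ha0 : (0 : ℝ) < a := ha
  have hb0 : (0 : ℝ) < b := hb
  simp only
  rw [entropy_eq_softG hK s a ha0, entropy_eq_softG hK s b hb0]
  exact antitoneOn_softG hK s (Set.mem_Ici.2 (inv_nonneg.2 hb0.le))
    (Set.mem_Ici.2 (inv_nonneg.2 ha0.le)) (inv_anti₀ ha0 hab)
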